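/- Let P be a probability measure on ℝ with finite second moment, mean μ := ∫ x dP(x) and standard deviation σ (the nonnegative square root of the variance), and let α ∈ [0, 1). Define CVaR_α(P) := inf over z ∈ ℝ of ( z + (1/(1−α)) ∫ max(x − z, 0) dP(x) ). Then CVaR_α(P) ≤ μ + √(α/(1−α)) · σ. -/

import Mathlib

open MeasureTheory

/-- The conditional value at risk of a probability measure `P` on `ℝ` at level `α`:
`CVaR_α(P) = inf_{z ∈ ℝ} ( z + (1/(1−α)) ∫ max(x − z, 0) dP(x) )`. -/
noncomputable def cvar (α : ℝ) (P : MeasureTheory.Measure ℝ) : ℝ :=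
  ⨅ z : ℝ, (z + (1 / (1 - α)) * ∫ x, max (x - z) 0 ∂P)

set_option maxHeartbeats 1000000 in
/-- Chebyshev–Cantelli bound on CVaR (upper-bound half of the worst-case CVaR formula
used in Theorem 1): for a probability measure `P` on `ℝ` with finite second moment,
mean `μ` and standard deviation `σ`, and `α ∈ [0, 1)`,
`CVaR_α(P) ≤ μ + √(α/(1−α)) σ`. -/
theorem cvar_le_mean_add_gamma_stddev
    (P : Measure ℝ) [IsProbabilityMeasure P]
    (hP2 : Integrable (fun x => x ^ 2) P)
    (μ σ : ℝ) (hμ : μ = ∫ x, x ∂P)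
    (hσ : σ = Real.sqrt (∫ x, (x - μ) ^ 2 ∂P))
    (α : ℝ) (hα : α ∈ Set.Ico (0 : ℝ) 1) :
    cvar α P ≤ μ + Real.sqrt (α / (1 - α)) * σ := by
  obtain ⟨hα0, hα1⟩ := hα
  have h1α : (0:ℝ) < 1 - α := by linarith
  set V := ∫ x, (x - μ) ^ 2 ∂P with hVdef
  have hVnn : 0 ≤ V := integral_nonneg fun x => sq_nonneg _
  have hσnn : 0 ≤ σ := hσ ▸ Real.sqrt_nonneg _
  have hσ2 : σ ^ 2 = V := by rw [hσ]; exact Real.sq_sqrt hVnn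
  have hid : Integrable (fun x : ℝ => x) P := by
    refine (hP2.add (integrable_const 1)).mono
      measurable_id.aestronglyMeasurable ?_
    filter_upwards with x
    simp only [Pi.add_apply, Real.norm_eq_abs]
    rw [abs_of_nonneg (by positivity : (0:ℝ) ≤ x ^ 2 + 1)]
    nlinarith [sq_nonneg (|x| - 1), abs_nonneg x, sq_abs x]
  have hsub : ∀ c : ℝ, Integrable (fun x => x - c) P :=
    fun c => hid.sub (integrable_const c)
  have hsq : ∀ c : ℝ, Integrable (fun x => (x - c) ^ 2) P := by
    intro c
    have he : (fun x : ℝ => (x - c) ^ 2) = fun x => x ^ 2 + (-2*c)*x + c^2 := by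
      funext x; ring
    rw [he]
    exact (hP2.add (hid.const_mul _)).add (integrable_const _)
  have hmaxint : ∀ z : ℝ, Integrable (fun x => max (x - z) 0) P := by
    intro z
    refine (hsub z).mono
      ((measurable_id.sub measurable_const).max measurable_const).aestronglyMeasurable ?_
    filter_upwards with x
    simp only [Real.norm_eq_abs]
    rcases le_or_gt (x - z) 0 with h | h
    · rw [max_eq_right h, abs_zero]; exact abs_nonneg _
    · rw [max_eq_left h.le]
  have hmean0 : ∫ x, (x - μ) ∂P = 0 := by
    rw [integral_sub hid (integrable_const μ), integral_const]
    simp [← hμ]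
  -- lower bound hence BddBelow
  have hlb : ∀ z : ℝ, μ ≤ z + (1 / (1 - α)) * ∫ x, max (x - z) 0 ∂P := by
    intro z
    have h0 : (0:ℝ) ≤ ∫ x, max (x - z) 0 ∂P :=
      integral_nonneg fun x => le_max_right _ _
    have h1 : μ - z ≤ ∫ x, max (x - z) 0 ∂P := by
      have hm := integral_mono (hsub z) (hmaxint z) (fun x => le_max_left _ _)
      have hz : ∫ x, (x - z) ∂P = μ - z := by
        rw [integral_sub hid (integrable_const z), integral_const]
        simp [← hμ]
      linarith
    have hc : (1:ℝ) ≤ 1 / (1 - α) := by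
      rw [le_div_iff₀ h1α]; linarith
    nlinarith [mul_nonneg (sub_nonneg.2 hc) h0]
  have hbdd : BddBelow (Set.range fun z : ℝ =>
      z + (1 / (1 - α)) * ∫ x, max (x - z) 0 ∂P) := by
    refine ⟨μ, ?_⟩
    rintro y ⟨z, rfl⟩
    exact hlb z
  -- key bound
  have key : ∀ a : ℝ, 0 < a → cvar α P ≤ μ + a * α + σ ^ 2 / (4 * a * (1 - α)) := by
    intro a ha
    set z := μ - a + 2 * a * α with hzdef
    have step1 : cvar α P ≤ z + (1 / (1 - α)) * ∫ x, max (x - z) 0 ∂P :=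
      ciInf_le hbdd z
    have hint2 : Integrable (fun x => (x - z + a) ^ 2 / (4 * a)) P := by
      have he : (fun x : ℝ => (x - z + a) ^ 2 / (4 * a)) =
          fun x => (1 / (4 * a)) * (x - (z - a)) ^ 2 := by
        funext x; field_simp; ring
      rw [he]; exact (hsq _).const_mul _
    have step2 : ∫ x, max (x - z) 0 ∂P ≤ ∫ x, (x - z + a) ^ 2 / (4 * a) ∂P := by
      refine integral_mono (hmaxint z) hint2 fun x => ?_
      refine max_le ?_ (by positivity)
      rw [le_div_iff₀ (by positivity)]
      nlinarith [sq_nonneg (x - z - a)]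
    have expand : ∫ x, (x - z + a) ^ 2 / (4 * a) ∂P
        = (V + (μ - z + a) ^ 2) / (4 * a) := by
      have he : (fun x : ℝ => (x - z + a) ^ 2 / (4 * a)) =
          fun x => (1 / (4 * a)) *
            ((x - μ) ^ 2 + (2 * (μ - z + a)) * (x - μ) + (μ - z + a) ^ 2) := by
        funext x; field_simp; ring
      have hI2 : Integrable (fun x : ℝ => 2 * (μ - z + a) * (x - μ)) P :=
        (hsub μ).const_mul _
      have hI1 : Integrable (fun x : ℝ => (x - μ) ^ 2 + 2 * (μ - z + a) * (x - μ)) P :=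
        (hsq μ).add hI2
      rw [he, integral_const_mul,
        integral_add hI1 (integrable_const _),
        integral_add (hsq μ) hI2,
        integral_const_mul, hmean0, integral_const]
      simp only [measure_univ, probReal_univ, ENNReal.toReal_one, one_smul, mul_zero, add_zero]
      rw [← hVdef]; ring
    have hcpos : (0:ℝ) ≤ 1 / (1 - α) := by positivity
    have step3 : z + (1 / (1 - α)) * ∫ x, max (x - z) 0 ∂P
        ≤ z + (1 / (1 - α)) * ((V + (μ - z + a) ^ 2) / (4 * a)) := by
      have := mul_le_mul_of_nonneg_left (expand ▸ step2) hcpos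
      linarith
    have heq : z + (1 / (1 - α)) * ((V + (μ - z + a) ^ 2) / (4 * a))
        = μ + a * α + V / (4 * a * (1 - α)) := by
      rw [hzdef]
      field_simp
      ring
    rw [hσ2]
    linarith [step1, step3, heq.le]
  -- conclude
  rcases eq_or_lt_of_le hα0 with h0 | hpos
  · -- α = 0
    have hγ0 : Real.sqrt (α / (1 - α)) = 0 := by
      rw [← h0]; simp
    rw [hγ0, zero_mul, add_zero]
    refine le_of_forall_pos_le_add fun ε hε => ?_
    have hk := key ((σ ^ 2 + 4 * ε) / (4 * ε)) (by positivity)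
    have hd : σ ^ 2 / (4 * ((σ ^ 2 + 4 * ε) / (4 * ε)) * (1 - α)) ≤ ε := by
      rw [← h0, sub_zero, mul_one, div_le_iff₀ (by positivity)]
      have hprod : 4 * ((σ ^ 2 + 4 * ε) / (4 * ε)) * ε = σ ^ 2 + 4 * ε := by
        field_simp
      nlinarith [hprod, hε]
    have hz : ((σ ^ 2 + 4 * ε) / (4 * ε)) * α = 0 := by rw [← h0, mul_zero]
    linarith
  · -- α > 0
    set γ := Real.sqrt (α / (1 - α)) with hγdef
    have hγpos : 0 < γ := Real.sqrt_pos.2 (by positivity)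
    have hγsq : γ ^ 2 = α / (1 - α) := Real.sq_sqrt (by positivity)
    have hγα : γ ^ 2 * (1 - α) = α := by
      rw [hγsq]; field_simp
    refine le_of_forall_pos_le_add fun ε hε => ?_
    obtain ⟨s, hsdef⟩ : ∃ s : ℝ, s = σ + ε / γ := ⟨_, rfl⟩
    have hs : 0 < s := by rw [hsdef]; positivity
    have hσs : σ ≤ s := by
      rw [hsdef]; nlinarith [div_pos hε hγpos]
    obtain ⟨a, hadef⟩ : ∃ a : ℝ, a = s / (2 * γ * (1 - α)) := ⟨_, rfl⟩
    have ha : 0 < a := by rw [hadef]; positivity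
    have hk := key a ha
    have haα : a * α = s * γ / 2 := by
      rw [hadef]
      field_simp
      linear_combination (-1) * hγα
    have h4a : 4 * a * (1 - α) = 2 * s / γ := by
      rw [hadef]; field_simp [hγpos.ne', h1α.ne']; ring
    have hdenom : σ ^ 2 / (4 * a * (1 - α)) ≤ s * γ / 2 := by
      rw [h4a, div_div_eq_mul_div, div_le_div_iff₀ (by positivity) (by norm_num)]
      have hσ2s : σ ^ 2 ≤ s ^ 2 := by nlinarith
      have hm : σ ^ 2 * γ ≤ s ^ 2 * γ := mul_le_mul_of_nonneg_right hσ2s hγpos.le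
      nlinarith [hm]
    have hsγ : s * γ = γ * σ + ε := by
      rw [hsdef]; field_simp [hγpos.ne']
    linarith
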